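/- arXiv:1612.06991 — 2 statements merged into one kernel-verified Lean document; each statement's English description precedes it below -/
import Mathlib

section
/- The bilinear bracket on the complex vector space with basis {L̄_n : n ∈ ℤ} ∪ {Ī_n : n ∈ ℤ} ∪ {c_1, c_2, c_3} determined by [L̄_m, L̄_n] = (m − n)·L̄_{m+n−1} + (m(m−1)(m−2)/12)·δ_{m+n−2,0}·c_1, [L̄_m, Ī_n] = −n·Ī_{m+n−1} − (m² − m)·δ_{m+n−1,0}·c_2, [Ī_m, Ī_n] = m·δ_{m+n,0}·c_3, and [x, c_i] = 0 for i = 1,2,3, is alternating and satisfies the Jacobi identity; hence it defines a complex Lie algebra structure (denoted 𝔏). -/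
/-- Basis symbols `L̄_n`, `Ī_n` (n ∈ ℤ), `c_1, c_2, c_3` of the Lie algebra `𝔏`. -/
inductive FHVBasis : Type
  | Lb : ℤ → FHVBasis
  | Ib : ℤ → FHVBasis
  | C1 : FHVBasis
  | C2 : FHVBasis
  | C3 : FHVBasis

/-- The underlying complex vector space of `𝔏`, freely spanned by the basis symbols. -/
abbrev FHV : Type := FHVBasis →₀ ℂ

noncomputable def lbGen (n : ℤ) : FHV := Finsupp.single (FHVBasis.Lb n) 1
noncomputable def ibGen (n : ℤ) : FHV := Finsupp.single (FHVBasis.Ib n) 1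
noncomputable def fc1v : FHV := Finsupp.single FHVBasis.C1 1
noncomputable def fc2v : FHV := Finsupp.single FHVBasis.C2 1
noncomputable def fc3v : FHV := Finsupp.single FHVBasis.C3 1

/-- The bracket of `𝔏` on basis elements:
`[L̄_m, L̄_n] = (m−n)·L̄_{m+n−1} + (m(m−1)(m−2)/12)·δ_{m+n−2,0}·c_1`,
`[L̄_m, Ī_n] = −n·Ī_{m+n−1} − (m²−m)·δ_{m+n−1,0}·c_2`,
`[Ī_m, Ī_n] = m·δ_{m+n,0}·c_3`, `c_1, c_2, c_3` central
(the value `[Ī_m, L̄_n] = −[L̄_n, Ī_m]` is forced by antisymmetry). -/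
noncomputable def fhvBB : FHVBasis → FHVBasis → FHV
  | .Lb m, .Lb n =>
      ((m : ℂ) - (n : ℂ)) • lbGen (m + n - 1)
        + (if m + n - 2 = 0 then (m : ℂ) * ((m : ℂ) - 1) * ((m : ℂ) - 2) / 12 else 0) • fc1v
  | .Lb m, .Ib n =>
      (-(n : ℂ)) • ibGen (m + n - 1)
        - (if m + n - 1 = 0 then (m : ℂ) ^ 2 - (m : ℂ) else 0) • fc2v
  | .Ib m, .Lb n =>
      (m : ℂ) • ibGen (m + n - 1)
        + (if m + n - 1 = 0 then (n : ℂ) ^ 2 - (n : ℂ) else 0) • fc2v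
  | .Ib m, .Ib n =>
      (if m + n = 0 then (m : ℂ) else 0) • fc3v
  | _, _ => 0

/-- The bilinear extension of the bracket of `𝔏` to the whole space. -/
noncomputable def fhvBracket (x y : FHV) : FHV :=
  x.sum fun a ca => y.sum fun b cb => (ca * cb) • fhvBB a b

lemma br_zero_left (y : FHV) : fhvBracket 0 y = 0 := by
  simp [fhvBracket]

lemma br_zero_right (x : FHV) : fhvBracket x 0 = 0 := by
  simp [fhvBracket]

lemma br_add_left (x y z : FHV) : fhvBracket (x + y) z = fhvBracket x z + fhvBracket y z := by
  unfold fhvBracket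
  rw [Finsupp.sum_add_index'] <;> intros <;> simp [add_mul, add_smul, Finsupp.sum_add]

lemma br_add_right (x y z : FHV) : fhvBracket x (y + z) = fhvBracket x y + fhvBracket x z := by
  unfold fhvBracket
  rw [← Finsupp.sum_add]
  congr 1; ext a ca
  rw [Finsupp.sum_add_index'] <;> intros <;> simp [mul_add, add_smul]

lemma br_smul_left (c : ℂ) (x y : FHV) : fhvBracket (c • x) y = c • fhvBracket x y := by
  unfold fhvBracket
  rw [Finsupp.sum_smul_index']
  · simp only [Finsupp.smul_sum, smul_smul, smul_eq_mul, mul_assoc]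
  · intro a; simp

lemma br_smul_right (c : ℂ) (x y : FHV) : fhvBracket x (c • y) = c • fhvBracket x y := by
  unfold fhvBracket
  rw [Finsupp.smul_sum]
  congr 1; ext a ca
  rw [Finsupp.sum_smul_index']
  · simp only [Finsupp.smul_sum, smul_smul, smul_eq_mul, mul_left_comm]
  · intro b; simp

lemma br_single_single (a b : FHVBasis) :
    fhvBracket (Finsupp.single a 1) (Finsupp.single b 1) = fhvBB a b := by
  unfold fhvBracket
  rw [Finsupp.sum_single_index, Finsupp.sum_single_index] <;> simp

lemma fhvBB_antisymm (a b : FHVBasis) : fhvBB a b + fhvBB b a = 0 := by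
  cases a <;> cases b <;> simp only [fhvBB, add_zero, zero_add] <;> try rfl
  case Lb.Lb m n =>
    rw [show n + m - 1 = m + n - 1 from by ring, show n + m - 2 = m + n - 2 from by ring]
    split_ifs with h
    · obtain rfl : n = 2 - m := by omega
      push_cast
      module
    · module
  case Lb.Ib m n =>
    rw [show n + m - 1 = m + n - 1 from by ring]
    module
  case Ib.Lb m n =>
    rw [show n + m - 1 = m + n - 1 from by ring]
    module
  case Ib.Ib m n =>
    rw [show n + m = m + n from by ring]
    split_ifs with h
    · obtain rfl : n = -m := by omega
      push_cast; module
    · module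

lemma br_antisymm (x y : FHV) : fhvBracket x y + fhvBracket y x = 0 := by
  induction x using Finsupp.induction_linear with
  | zero => simp [br_zero_left, br_zero_right]
  | add a b ha hb =>
    rw [br_add_left, br_add_right, add_add_add_comm, ha, hb, add_zero]
  | single a c =>
    induction y using Finsupp.induction_linear with
    | zero => simp [br_zero_left, br_zero_right]
    | add u v hu hv =>
      rw [br_add_right, br_add_left, add_add_add_comm, hu, hv, add_zero]
    | single b d =>
      rw [show (Finsupp.single a c : FHV) = c • Finsupp.single a 1 by
            rw [Finsupp.smul_single, smul_eq_mul, mul_one],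
          show (Finsupp.single b d : FHV) = d • Finsupp.single b 1 by
            rw [Finsupp.smul_single, smul_eq_mul, mul_one],
          br_smul_left, br_smul_right, br_smul_left, br_smul_right,
          br_single_single, br_single_single, smul_comm d c, ← smul_add,
          ← smul_add, fhvBB_antisymm, smul_zero, smul_zero]

lemma br_alt (x : FHV) : fhvBracket x x = 0 := by
  have h := br_antisymm x x
  have h2 : (2 : ℂ) • fhvBracket x x = 0 := by rw [two_smul]; exact h
  simpa using smul_eq_zero.mp h2

lemma br_neg_right (x y : FHV) : fhvBracket x (-y) = -fhvBracket x y := by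
  have h := br_smul_right (-1 : ℂ) x y
  simpa using h

lemma br_sub_right (x y z : FHV) : fhvBracket x (y - z) = fhvBracket x y - fhvBracket x z := by
  rw [sub_eq_add_neg, br_add_right, br_neg_right, sub_eq_add_neg]


lemma jac_basis (a b c : FHVBasis) :
    fhvBracket (Finsupp.single a 1) (fhvBB b c)
      + fhvBracket (Finsupp.single b 1) (fhvBB c a)
      + fhvBracket (Finsupp.single c 1) (fhvBB a b) = 0 := by
  cases a <;> cases b <;> cases c <;>
    simp only [fhvBB, lbGen, ibGen, fc1v, fc2v, fc3v, br_add_right, br_sub_right,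
      br_smul_right, br_single_single, br_zero_right, smul_zero, add_zero, zero_add,
      sub_zero, zero_sub, neg_zero, smul_neg] <;>
    try rfl
  case Lb.Lb.Lb l m n =>
    ring_nf
    split_ifs with h
    · obtain rfl : l = 3 - m - n := by omega
      push_cast; ring_nf; module
    · module
  case Lb.Lb.Ib l m n =>
    ring_nf
    split_ifs with h
    · obtain rfl : l = 2 - m - n := by omega
      push_cast; ring_nf; module
    · module
  case Lb.Ib.Lb l m n =>
    ring_nf
    split_ifs with h
    · obtain rfl : l = 2 - m - n := by omega
      push_cast; ring_nf; module
    · module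
  case Ib.Lb.Lb l m n =>
    ring_nf
    split_ifs with h
    · obtain rfl : l = 2 - m - n := by omega
      push_cast; ring_nf; module
    · module
  all_goals (ring_nf; split_ifs <;> module)

lemma single_eq_smul (a : FHVBasis) (c : ℂ) :
    (Finsupp.single a c : FHV) = c • Finsupp.single a 1 := by
  rw [Finsupp.smul_single, smul_eq_mul, mul_one]

lemma add3_rearrange (A1 A2 A3 B1 B2 B3 : FHV) (h1 : A1 + A2 + A3 = 0)
    (h2 : B1 + B2 + B3 = 0) : (A1 + B1) + (A2 + B2) + (A3 + B3) = 0 := by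
  calc (A1 + B1) + (A2 + B2) + (A3 + B3) = (A1 + A2 + A3) + (B1 + B2 + B3) := by abel
  _ = 0 := by rw [h1, h2, add_zero]

lemma br_jacobi (x y z : FHV) :
    fhvBracket x (fhvBracket y z) + fhvBracket y (fhvBracket z x)
      + fhvBracket z (fhvBracket x y) = 0 := by
  induction x using Finsupp.induction_linear with
  | zero => simp [br_zero_left, br_zero_right]
  | add x1 x2 h1 h2 =>
    simp only [br_add_left, br_add_right]
    exact add3_rearrange _ _ _ _ _ _ h1 h2
  | single a ca =>
    induction y using Finsupp.induction_linear with
    | zero => simp [br_zero_left, br_zero_right]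
    | add y1 y2 h1 h2 =>
      simp only [br_add_left, br_add_right]
      exact add3_rearrange _ _ _ _ _ _ h1 h2
    | single b cb =>
      induction z using Finsupp.induction_linear with
      | zero => simp [br_zero_left, br_zero_right]
      | add z1 z2 h1 h2 =>
        simp only [br_add_left, br_add_right]
        exact add3_rearrange _ _ _ _ _ _ h1 h2
      | single c cc =>
        rw [single_eq_smul a ca, single_eq_smul b cb, single_eq_smul c cc]
        simp only [br_smul_left, br_smul_right, br_single_single, smul_smul]
        rw [show cc * cb * ca = ca * cb * cc from by ring,
          show ca * cc * cb = ca * cb * cc from by ring,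
          show cb * ca * cc = ca * cb * cc from by ring,
          ← smul_add, ← smul_add, jac_basis, smul_zero]

/-- STATEMENT 7: the bracket determined by the stated values on the basis of `𝔏` is
bilinear, alternating and satisfies the Jacobi identity; hence it defines a complex Lie
algebra structure on `𝔏`. -/
theorem fhvBracket_isLieBracket :
    (∀ x y z : FHV, fhvBracket (x + y) z = fhvBracket x z + fhvBracket y z) ∧
    (∀ (c : ℂ) (x y : FHV), fhvBracket (c • x) y = c • fhvBracket x y) ∧
    (∀ x y z : FHV, fhvBracket x (y + z) = fhvBracket x y + fhvBracket x z) ∧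
    (∀ (c : ℂ) (x y : FHV), fhvBracket x (c • y) = c • fhvBracket x y) ∧
    (∀ x : FHV, fhvBracket x x = 0) ∧
    (∀ x y z : FHV,
      fhvBracket x (fhvBracket y z) + fhvBracket y (fhvBracket z x)
        + fhvBracket z (fhvBracket x y) = 0) := by
  exact ⟨fun x y z => br_add_left x y z, br_smul_left, fun x y z => br_add_right x y z,
    br_smul_right, br_alt, br_jacobi⟩
end

section
/- The bilinear bracket on the complex vector space with basis {T^m ⊗ t^n : (m,n) ∈ ℤ²} ∪ {E^m ⊗ t^n : (m,n) ∈ ℤ²} ∪ {K_1, K_2, K_3, K_4} determined by [T^m ⊗ t^n, T^r ⊗ t^s] = 0, [T^m ⊗ t^n, E^r ⊗ t^s] = (nr − ms)·T^{m+r} ⊗ t^{n+s−1} + m·δ_{m+r,0}·δ_{n+s+1,0}·K_1 + n·δ_{m+r,0}·δ_{n+s,0}·K_2, [E^m ⊗ t^n, E^r ⊗ t^s] = (nr − ms)·E^{m+r} ⊗ t^{n+s−1} + m·δ_{m+r,0}·δ_{n+s+1,0}·K_3 + n·δ_{m+r,0}·δ_{n+s,0}·K_4, and [x, K_i] = 0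 for i = 1,…,4, is alternating and satisfies the Jacobi identity; hence it defines a complex Lie algebra structure (denoted 𝔏̂*). -/
/-- Basis symbols `T^m ⊗ t^n`, `E^m ⊗ t^n` for `(m,n) ∈ ℤ²`, and `K_1, …, K_4` of the
Lie algebra `𝔏̂*`. -/
inductive LSBasis : Type
  | T : ℤ → ℤ → LSBasis
  | E : ℤ → ℤ → LSBasis
  | K1 : LSBasis
  | K2 : LSBasis
  | K3 : LSBasis
  | K4 : LSBasis

/-- The underlying complex vector space of `𝔏̂*`, freely spanned by the basis symbols. -/
abbrev LS : Type := LSBasis →₀ ℂ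

/-- The element `T^m ⊗ t^n`. -/
noncomputable def tsGen (m n : ℤ) : LS := Finsupp.single (LSBasis.T m n) 1
/-- The element `E^m ⊗ t^n`. -/
noncomputable def esGen (m n : ℤ) : LS := Finsupp.single (LSBasis.E m n) 1
noncomputable def ks1v : LS := Finsupp.single LSBasis.K1 1
noncomputable def ks2v : LS := Finsupp.single LSBasis.K2 1
noncomputable def ks3v : LS := Finsupp.single LSBasis.K3 1
noncomputable def ks4v : LS := Finsupp.single LSBasis.K4 1

/-- The bracket of `𝔏̂*` on basis elements:
`[T^m ⊗ t^n, T^r ⊗ t^s] = 0`,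
`[T^m ⊗ t^n, E^r ⊗ t^s] = (nr − ms)·T^{m+r} ⊗ t^{n+s−1} + m·δ_{m+r,0}·δ_{n+s+1,0}·K_1
  + n·δ_{m+r,0}·δ_{n+s,0}·K_2`,
`[E^m ⊗ t^n, E^r ⊗ t^s] = (nr − ms)·E^{m+r} ⊗ t^{n+s−1} + m·δ_{m+r,0}·δ_{n+s+1,0}·K_3
  + n·δ_{m+r,0}·δ_{n+s,0}·K_4`,
`K_1, …, K_4` central (the value `[E^r ⊗ t^s, T^m ⊗ t^n]` is forced by antisymmetry). -/
noncomputable def lsBB : LSBasis → LSBasis → LS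
  | .T _ _, .T _ _ => 0
  | .T m n, .E r s =>
      ((n * r - m * s : ℤ) : ℂ) • tsGen (m + r) (n + s - 1)
        + (if m + r = 0 ∧ n + s + 1 = 0 then (m : ℂ) else 0) • ks1v
        + (if m + r = 0 ∧ n + s = 0 then (n : ℂ) else 0) • ks2v
  | .E r s, .T m n =>
      ((m * s - n * r : ℤ) : ℂ) • tsGen (m + r) (n + s - 1)
        - (if m + r = 0 ∧ n + s + 1 = 0 then (m : ℂ) else 0) • ks1v
        - (if m + r = 0 ∧ n + s = 0 then (n : ℂ) else 0) • ks2v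
  | .E m n, .E r s =>
      ((n * r - m * s : ℤ) : ℂ) • esGen (m + r) (n + s - 1)
        + (if m + r = 0 ∧ n + s + 1 = 0 then (m : ℂ) else 0) • ks3v
        + (if m + r = 0 ∧ n + s = 0 then (n : ℂ) else 0) • ks4v
  | _, _ => 0

/-- The bilinear extension of the bracket of `𝔏̂*` to the whole space. -/
noncomputable def lsBracket (x y : LS) : LS :=
  x.sum fun a ca => y.sum fun b cb => (ca * cb) • lsBB a b

namespace LSAux

open Finsupp

/-- bracket with fixed left basis element, as a linear map. -/
noncomputable def brkt (a : LSBasis) : LS →ₗ[ℂ] LS :=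
  Finsupp.lsum ℂ fun b => LinearMap.toSpanSingleton ℂ LS (lsBB a b)

@[simp] lemma brkt_single (a b : LSBasis) (c : ℂ) :
    brkt a (Finsupp.single b c) = c • lsBB a b := by
  simp [brkt, LinearMap.toSpanSingleton_apply]

/-- the full bilinear bracket. -/
noncomputable def lsB : LS →ₗ[ℂ] LS →ₗ[ℂ] LS :=
  Finsupp.lsum ℂ fun a => LinearMap.toSpanSingleton ℂ (LS →ₗ[ℂ] LS) (brkt a)

@[simp] lemma lsB_single (a : LSBasis) (c : ℂ) :
    lsB (Finsupp.single a c) = c • brkt a := by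
  simp [lsB, LinearMap.toSpanSingleton_apply]

lemma lsBracket_eq (x y : LS) : lsBracket x y = lsB x y := by
  rw [lsBracket, lsB, Finsupp.lsum_apply, LinearMap.finsupp_sum_apply]
  refine Finsupp.sum_congr fun a _ => ?_
  simp only [LinearMap.toSpanSingleton_apply, LinearMap.smul_apply]
  rw [brkt, Finsupp.lsum_apply, Finsupp.smul_sum]
  refine Finsupp.sum_congr fun b _ => ?_
  simp [LinearMap.toSpanSingleton_apply, mul_smul]

end LSAux
namespace LSAux

@[simp] lemma lsBB_K1_right (a : LSBasis) : lsBB a .K1 = 0 := by cases a <;> rfl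
@[simp] lemma lsBB_K2_right (a : LSBasis) : lsBB a .K2 = 0 := by cases a <;> rfl
@[simp] lemma lsBB_K3_right (a : LSBasis) : lsBB a .K3 = 0 := by cases a <;> rfl
@[simp] lemma lsBB_K4_right (a : LSBasis) : lsBB a .K4 = 0 := by cases a <;> rfl
@[simp] lemma lsBB_K1_left (b : LSBasis) : lsBB .K1 b = 0 := by cases b <;> rfl
@[simp] lemma lsBB_K2_left (b : LSBasis) : lsBB .K2 b = 0 := by cases b <;> rfl
@[simp] lemma lsBB_K3_left (b : LSBasis) : lsBB .K3 b = 0 := by cases b <;> rfl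
@[simp] lemma lsBB_K4_left (b : LSBasis) : lsBB .K4 b = 0 := by cases b <;> rfl

lemma lsBB_antisymm (a b : LSBasis) : lsBB b a = - lsBB a b := by
  cases a with
  | T m n =>
    cases b with
    | T r s => simp [lsBB]
    | E r s =>
      simp only [lsBB]
      push_cast
      module
    | _ => simp
  | E m n =>
    cases b with
    | T r s =>
      simp only [lsBB]
      push_cast
      module
    | E r s =>
      simp only [lsBB]
      rw [show r + m = m + r from by ring, show s + n = n + s from by ring]
      have h3 : (if m + r = 0 ∧ n + s + 1 = 0 then (r : ℂ) else 0)
          = -(if m + r = 0 ∧ n + s + 1 = 0 then (m : ℂ) else 0) := by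
        split_ifs with h
        · have : (m : ℂ) + r = 0 := by exact_mod_cast congrArg (Int.cast : ℤ → ℂ) h.1
          linear_combination this
        · simp
      have h4 : (if m + r = 0 ∧ n + s = 0 then (s : ℂ) else 0)
          = -(if m + r = 0 ∧ n + s = 0 then (n : ℂ) else 0) := by
        split_ifs with h
        · have : (n : ℂ) + s = 0 := by exact_mod_cast congrArg (Int.cast : ℤ → ℂ) h.2
          linear_combination this
        · simp
      rw [h3, h4]
      push_cast
      module
    | _ => simp
  | _ => cases b <;> simp

end LSAux
namespace LSAux

@[simp] lemma brkt_ts (a : LSBasis) (m n : ℤ) : brkt a (tsGen m n) = lsBB a (.T m n) := by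
  simp [tsGen]
@[simp] lemma brkt_es (a : LSBasis) (m n : ℤ) : brkt a (esGen m n) = lsBB a (.E m n) := by
  simp [esGen]
@[simp] lemma brkt_ks1 (a : LSBasis) : brkt a ks1v = 0 := by simp [ks1v]
@[simp] lemma brkt_ks2 (a : LSBasis) : brkt a ks2v = 0 := by simp [ks2v]
@[simp] lemma brkt_ks3 (a : LSBasis) : brkt a ks3v = 0 := by simp [ks3v]
@[simp] lemma brkt_ks4 (a : LSBasis) : brkt a ks4v = 0 := by simp [ks4v]

@[simp] lemma brkt_K1_apply (x : LS) : brkt .K1 x = 0 := by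
  simp [brkt, Finsupp.lsum_apply, LinearMap.toSpanSingleton_apply, Finsupp.sum]
@[simp] lemma brkt_K2_apply (x : LS) : brkt .K2 x = 0 := by
  simp [brkt, Finsupp.lsum_apply, LinearMap.toSpanSingleton_apply, Finsupp.sum]
@[simp] lemma brkt_K3_apply (x : LS) : brkt .K3 x = 0 := by
  simp [brkt, Finsupp.lsum_apply, LinearMap.toSpanSingleton_apply, Finsupp.sum]
@[simp] lemma brkt_K4_apply (x : LS) : brkt .K4 x = 0 := by
  simp [brkt, Finsupp.lsum_apply, LinearMap.toSpanSingleton_apply, Finsupp.sum]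

@[simp] lemma brkt_ite (a : LSBasis) (P : Prop) [Decidable P] (x : LS) :
    brkt a (if P then x else 0) = if P then brkt a x else 0 := by
  split_ifs <;> simp

lemma lsB_add_flip : lsB + lsB.flip = 0 := by
  ext a b
  simp [lsBB_antisymm a b]

lemma lsB_antisymm (x y : LS) : lsB x y = - lsB y x := by
  have := LinearMap.congr_fun (LinearMap.congr_fun lsB_add_flip x) y
  simp only [LinearMap.add_apply, LinearMap.flip_apply, LinearMap.zero_apply] at this
  exact eq_neg_of_add_eq_zero_left this

set_option maxHeartbeats 2000000 in
lemma jacobi_bb (a b c : LSBasis) :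
    brkt a (lsBB b c) + brkt b (lsBB c a) + brkt c (lsBB a b) = 0 := by
  rcases a with ⟨m, n⟩ | ⟨m, n⟩ | _ | _ | _ | _ <;>
  rcases b with ⟨r, s⟩ | ⟨r, s⟩ | _ | _ | _ | _ <;>
  rcases c with ⟨u, v⟩ | ⟨u, v⟩ | _ | _ | _ | _ <;>
  first
  | (simp [lsBB]; done)
  | (simp only [lsBB, map_add, map_sub, map_smul, brkt_ts, brkt_es, brkt_ks1, brkt_ks2,
      brkt_ks3, brkt_ks4, smul_zero, add_zero, sub_zero, smul_sub]
     ring_nf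
     split_ifs <;>
     first
     | (exfalso; omega)
     | (have hm : m = -u - r := (by omega); have hn : n = -s - v := (by omega); subst hm; subst hn; push_cast; module)
     | (have hm : m = -u - r := (by omega); have hn : n = 1 - s - v := (by omega); subst hm; subst hn; push_cast; module)
     | (push_cast; module))

end LSAux
namespace LSAux

lemma jacobi_lsB (x y z : LS) :
    lsB x (lsB y z) + lsB y (lsB z x) + lsB z (lsB x y) = 0 := by
  induction x using Finsupp.induction_linear with
  | zero => simp
  | add f g hf hg =>
    simp only [map_add, LinearMap.add_apply]
    have h2 := congrArg₂ (· + ·) hf hg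
    simp only [add_zero] at h2
    rw [← h2]
    abel
  | single a ca =>
    induction y using Finsupp.induction_linear with
    | zero => simp
    | add f g hf hg =>
      simp only [map_add, LinearMap.add_apply]
      have h2 := congrArg₂ (· + ·) hf hg
      simp only [add_zero] at h2
      rw [← h2]
      abel
    | single b cb =>
      induction z using Finsupp.induction_linear with
      | zero => simp
      | add f g hf hg =>
        simp only [map_add, LinearMap.add_apply]
        have h2 := congrArg₂ (· + ·) hf hg
        simp only [add_zero] at h2
        rw [← h2]
        abel
      | single c cc =>
        have h := jacobi_bb a b c
        have h' : brkt c (lsBB a b) = -(brkt a (lsBB b c) + brkt b (lsBB c a)) := by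
          apply neg_eq_of_add_eq_zero_left at h
          rw [← h, neg_neg]
        simp only [lsB_single, LinearMap.smul_apply, map_smul, brkt_single, h']
        module

end LSAux
/-- STATEMENT 12: the bracket determined by the stated values on the basis of `𝔏̂*` is
bilinear, alternating and satisfies the Jacobi identity; hence it defines a complex Lie
algebra structure on `𝔏̂*`. -/
theorem lsBracket_isLieBracket :
    (∀ x y z : LS, lsBracket (x + y) z = lsBracket x z + lsBracket y z) ∧
    (∀ (c : ℂ) (x y : LS), lsBracket (c • x) y = c • lsBracket x y) ∧
    (∀ x y z : LS, lsBracket x (y + z) = lsBracket x y + lsBracket x z) ∧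
    (∀ (c : ℂ) (x y : LS), lsBracket x (c • y) = c • lsBracket x y) ∧
    (∀ x : LS, lsBracket x x = 0) ∧
    (∀ x y z : LS,
      lsBracket x (lsBracket y z) + lsBracket y (lsBracket z x)
        + lsBracket z (lsBracket x y) = 0) := by
  refine ⟨?_, ?_, ?_, ?_, ?_, ?_⟩
  · intro x y z; simp only [LSAux.lsBracket_eq, map_add, LinearMap.add_apply]
  · intro c x y; simp only [LSAux.lsBracket_eq, map_smul, LinearMap.smul_apply]
  · intro x y z; simp only [LSAux.lsBracket_eq, map_add]
  · intro c x y; simp only [LSAux.lsBracket_eq, map_smul]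
  · intro x
    rw [LSAux.lsBracket_eq]
    have h := LSAux.lsB_antisymm x x
    have h3 : (2 : ℂ) • LSAux.lsB x x = 0 := by
      rw [two_smul]; nth_rewrite 1 [h]; exact neg_add_cancel _
    simpa using (smul_eq_zero.mp h3).resolve_left two_ne_zero
  · intro x y z
    simp only [LSAux.lsBracket_eq]
    exact LSAux.jacobi_lsB x y z
end
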